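/- For natural numbers a and b, the sum of the signs of all (a,b)-shuffles (permutations σ of {1,...,a+b} with σ(1)<...<σ(a) and σ(a+1)<...<σ(a+b)) equals 0 if a and b are both odd, and equals the binomial coefficient C(⌊(a+b)/2⌋, ⌊a/2⌋) otherwise. -/
import Mathlib

open scoped Classical

/-- Sum of the signs of all permutations of `Fin n` that are strictly increasing
on the first `m` positions and on the remaining `n - m` positions
(the `(m, n-m)`-shuffles when the split point is `m`). -/
noncomputable def shuffleSignSum (n m : ℕ) : ℤ :=
  ∑ σ : Equiv.Perm (Fin n),
    if ((∀ i j : Fin n, i < j → (j : ℕ) < m → σ i < σ j) ∧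
        (∀ i j : Fin n, i < j → m ≤ (i : ℕ) → σ i < σ j)) then
      (Equiv.Perm.sign σ : ℤ) else 0

namespace ShuffleAux

open Finset Equiv

variable {n : ℕ}

def shCond (a : ℕ) (σ : Equiv.Perm (Fin n)) : Prop :=
  (∀ i j : Fin n, i < j → (j : ℕ) < a → σ i < σ j) ∧
  (∀ i j : Fin n, i < j → a ≤ (i : ℕ) → σ i < σ j)

def pos (n a : ℕ) : Finset (Fin n) := Finset.univ.filter (fun i => (i : ℕ) < a)

lemma mem_pos {a : ℕ} {i : Fin n} : i ∈ pos n a ↔ (i : ℕ) < a := by simp [pos]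

lemma image_val_pos {a : ℕ} (ha : a ≤ n) :
    (pos n a).image Fin.val = Finset.range a := by
  ext j
  simp only [mem_image, mem_pos, mem_range]
  constructor
  · rintro ⟨i, hi, rfl⟩; exact hi
  · intro hj; exact ⟨⟨j, lt_of_lt_of_le hj ha⟩, hj, rfl⟩

lemma card_pos {a : ℕ} (ha : a ≤ n) : (pos n a).card = a := by
  have h1 : ((pos n a).image Fin.val).card = (pos n a).card :=
    Finset.card_image_of_injective _ Fin.val_injective
  rw [← h1, image_val_pos ha, Finset.card_range]

lemma sum_pos {a : ℕ} (ha : a ≤ n) :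
    ∑ x ∈ pos n a, (x : ℕ) = a * (a - 1) / 2 := by
  rw [← Finset.sum_range_id a, ← image_val_pos ha,
    Finset.sum_image (fun x _ y _ h => Fin.val_injective h)]

lemma compl_card {a : ℕ} {s : Finset (Fin n)} (hs : s.card = a) :
    sᶜ.card = n - a := by
  rw [Finset.card_compl, Fintype.card_fin, hs]

noncomputable def spFun (a : ℕ) (ha : a ≤ n) (s : Finset (Fin n)) (hs : s.card = a) :
    Fin n → Fin n := fun i =>
  if h : (i : ℕ) < a then s.orderEmbOfFin hs ⟨i, h⟩
  else sᶜ.orderEmbOfFin (compl_card hs) ⟨(i : ℕ) - a, by have := i.isLt; omega⟩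

lemma spFun_injective (a : ℕ) (ha : a ≤ n) (s : Finset (Fin n)) (hs : s.card = a) :
    Function.Injective (spFun a ha s hs) := by
  intro i j hij
  unfold spFun at hij
  by_cases hi : (i : ℕ) < a <;> by_cases hj : (j : ℕ) < a
  · rw [dif_pos hi, dif_pos hj] at hij
    have := congrArg Fin.val ((s.orderEmbOfFin hs).injective hij)
    exact Fin.ext this
  · rw [dif_pos hi, dif_neg hj] at hij
    have h1 := s.orderEmbOfFin_mem hs ⟨i, hi⟩
    have h2 := sᶜ.orderEmbOfFin_mem (compl_card hs) ⟨(j : ℕ) - a, by have := j.isLt; omega⟩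
    rw [hij] at h1
    exact absurd h1 (Finset.mem_compl.mp h2)
  · rw [dif_neg hi, dif_pos hj] at hij
    have h1 := s.orderEmbOfFin_mem hs ⟨j, hj⟩
    have h2 := sᶜ.orderEmbOfFin_mem (compl_card hs) ⟨(i : ℕ) - a, by have := i.isLt; omega⟩
    rw [← hij] at h1
    exact absurd h1 (Finset.mem_compl.mp h2)
  · rw [dif_neg hi, dif_neg hj] at hij
    have := (sᶜ.orderEmbOfFin (compl_card hs)).injective hij
    have h3 := congrArg Fin.val this
    simp only at h3
    have hi' := i.isLt; have hj' := j.isLt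
    exact Fin.ext (by omega)

noncomputable def spPerm (a : ℕ) (ha : a ≤ n) (s : Finset (Fin n)) (hs : s.card = a) :
    Equiv.Perm (Fin n) :=
  Equiv.ofBijective _ ((Finite.injective_iff_bijective).mp (spFun_injective a ha s hs))

lemma spPerm_apply_lt (a : ℕ) (ha : a ≤ n) (s : Finset (Fin n)) (hs : s.card = a)
    (i : Fin n) (h : (i : ℕ) < a) :
    spPerm a ha s hs i = s.orderEmbOfFin hs ⟨i, h⟩ := by
  simp [spPerm, Equiv.ofBijective_apply, spFun, dif_pos h]

lemma spPerm_apply_ge (a : ℕ) (ha : a ≤ n) (s : Finset (Fin n)) (hs : s.card = a)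
    (i : Fin n) (h : ¬ (i : ℕ) < a) :
    spPerm a ha s hs i
      = sᶜ.orderEmbOfFin (compl_card hs) ⟨(i : ℕ) - a, by have := i.isLt; omega⟩ := by
  simp [spPerm, Equiv.ofBijective_apply, spFun, dif_neg h]

lemma spPerm_cond (a : ℕ) (ha : a ≤ n) (s : Finset (Fin n)) (hs : s.card = a) :
    shCond a (spPerm a ha s hs) := by
  constructor
  · intro i j hij hj
    have hi : (i : ℕ) < a := lt_trans (Fin.lt_def.mp hij) hj
    rw [spPerm_apply_lt a ha s hs i hi, spPerm_apply_lt a ha s hs j hj]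
    exact (s.orderEmbOfFin hs).strictMono (by exact Fin.lt_def.mpr (Fin.lt_def.mp hij))
  · intro i j hij hi
    have hj : ¬ (j : ℕ) < a := by have := Fin.lt_def.mp hij; omega
    rw [spPerm_apply_ge a ha s hs i (by omega), spPerm_apply_ge a ha s hs j hj]
    refine (sᶜ.orderEmbOfFin (compl_card hs)).strictMono ?_
    have := Fin.lt_def.mp hij
    exact Fin.lt_def.mpr (by simp; omega)

lemma spPerm_image (a : ℕ) (ha : a ≤ n) (s : Finset (Fin n)) (hs : s.card = a) :
    (pos n a).image (spPerm a ha s hs) = s := by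
  apply Finset.eq_of_subset_of_card_le
  · intro x hx
    obtain ⟨i, hi, rfl⟩ := Finset.mem_image.mp hx
    rw [spPerm_apply_lt a ha s hs i (mem_pos.mp hi)]
    exact s.orderEmbOfFin_mem hs _
  · rw [hs, Finset.card_image_of_injective _ (spPerm a ha s hs).injective, card_pos ha]

end ShuffleAux

namespace ShuffleAux
open Finset Equiv
variable {n : ℕ}

lemma cond_unique {a : ℕ} (ha : a ≤ n) {σ τ : Equiv.Perm (Fin n)}
    (hσ : shCond a σ) (hτ : shCond a τ)
    (him : (pos n a).image σ = (pos n a).image τ) : σ = τ := by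
  set s : Finset (Fin n) := (pos n a).image σ with hsdef
  have hs : s.card = a := by
    rw [hsdef, Finset.card_image_of_injective _ σ.injective, card_pos ha]
  have hsimσ : (pos n a).image σ = s := hsdef.symm
  clear_value s
  -- first block
  have key1 : ∀ (π : Equiv.Perm (Fin n)), shCond a π → (pos n a).image π = s →
      ∀ k : Fin a, π ⟨k, lt_of_lt_of_le k.isLt ha⟩ = s.orderEmbOfFin hs k := by
    intro π hπ himπ k
    have hmono : StrictMono (fun k : Fin a => π ⟨k, lt_of_lt_of_le k.isLt ha⟩) := by
      intro k l hkl
      exact hπ.1 _ _ (Fin.lt_def.mpr (Fin.lt_def.mp hkl)) l.isLt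
    have hmem : ∀ k : Fin a, π ⟨k, lt_of_lt_of_le k.isLt ha⟩ ∈ s := by
      intro k
      rw [← himπ]
      exact Finset.mem_image_of_mem _ (mem_pos.mpr k.isLt)
    have := Finset.orderEmbOfFin_unique hs hmem hmono
    exact congrFun this k
  -- second block
  have key2 : ∀ (π : Equiv.Perm (Fin n)), shCond a π → (pos n a).image π = s →
      ∀ k : Fin (n - a), π ⟨a + k, by have := k.isLt; omega⟩
        = sᶜ.orderEmbOfFin (compl_card hs) k := by
    intro π hπ himπ k
    have hmono : StrictMono (fun k : Fin (n - a) => π ⟨a + k, by have := k.isLt; omega⟩) := by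
      intro k l hkl
      refine hπ.2 _ _ (Fin.lt_def.mpr ?_) (by simp)
      simpa using Fin.lt_def.mp hkl
    have hmem : ∀ k : Fin (n - a), π ⟨a + k, by have := k.isLt; omega⟩ ∈ sᶜ := by
      intro k
      rw [Finset.mem_compl]
      intro hmem
      obtain ⟨i, hi, hie⟩ := Finset.mem_image.mp ((Finset.ext_iff.mp himπ _).mpr hmem)
      have := π.injective hie
      have h1 := mem_pos.mp hi
      rw [this] at h1
      simp at h1
    have := Finset.orderEmbOfFin_unique (compl_card hs) hmem hmono
    exact congrFun this k
  have hims : (pos n a).image τ = s := him.symm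
  ext i
  rcases lt_or_ge (i : ℕ) a with h | h
  · have h1 := key1 σ hσ hsimσ ⟨i, h⟩
    have h2 := key1 τ hτ hims ⟨i, h⟩
    simp only [Fin.eta] at h1 h2
    rw [h1, h2]
  · have hl : (i : ℕ) - a < n - a := by have := i.isLt; omega
    have hi' : (⟨a + ((i : ℕ) - a), by omega⟩ : Fin n) = i := Fin.ext (by simp; omega)
    have h1 := key1  -- dummy
    have h3 := key2 σ hσ hsimσ ⟨(i : ℕ) - a, hl⟩
    have h4 := key2 τ hτ hims ⟨(i : ℕ) - a, hl⟩
    rw [hi'] at h3 h4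
    rw [h3, h4]

lemma cond_eq_spPerm {a : ℕ} (ha : a ≤ n) {σ : Equiv.Perm (Fin n)} (hσ : shCond a σ) :
    σ = spPerm a ha ((pos n a).image σ)
      (by rw [Finset.card_image_of_injective _ σ.injective, card_pos ha]) := by
  apply cond_unique ha hσ (spPerm_cond _ _ _ _)
  rw [spPerm_image]

end ShuffleAux

namespace ShuffleAux
open Finset Equiv
variable {n : ℕ}

lemma swap_mono_mem {t : Finset (Fin n)} {y x u v : Fin n}
    (hy : y ∈ t) (hx : x ∉ t) (hxy : (x : ℕ) = (y : ℕ) + 1)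
    (hu : u ∈ t) (hv : v ∈ t) (huv : u < v) :
    Equiv.swap y x u < Equiv.swap y x v := by
  have hux : u ≠ x := fun h => hx (h ▸ hu)
  have hvx : v ≠ x := fun h => hx (h ▸ hv)
  rcases eq_or_ne u y with rfl | huy
  · rw [Equiv.swap_apply_left, Equiv.swap_apply_of_ne_of_ne (ne_of_gt huv) hvx]
    have h1 := Fin.lt_def.mp huv
    have h2 : (v : ℕ) ≠ (x : ℕ) := fun h => hvx (Fin.ext h)
    exact Fin.lt_def.mpr (by omega)
  · rcases eq_or_ne v y with rfl | hvy
    · rw [Equiv.swap_apply_left, Equiv.swap_apply_of_ne_of_ne huy hux]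
      have h1 := Fin.lt_def.mp huv
      exact Fin.lt_def.mpr (by omega)
    · rwa [Equiv.swap_apply_of_ne_of_ne huy hux, Equiv.swap_apply_of_ne_of_ne hvy hvx]

lemma swap_mono_notMem {t : Finset (Fin n)} {y x u v : Fin n}
    (hy : y ∈ t) (hx : x ∉ t) (hxy : (x : ℕ) = (y : ℕ) + 1)
    (hu : u ∉ t) (hv : v ∉ t) (huv : u < v) :
    Equiv.swap y x u < Equiv.swap y x v := by
  have huy : u ≠ y := fun h => hu (h ▸ hy)
  have hvy : v ≠ y := fun h => hv (h ▸ hy)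
  rcases eq_or_ne u x with rfl | hux
  · rw [Equiv.swap_apply_right, Equiv.swap_apply_of_ne_of_ne hvy (ne_of_gt huv)]
    have h1 := Fin.lt_def.mp huv
    exact Fin.lt_def.mpr (by omega)
  · rcases eq_or_ne v x with rfl | hvx
    · rw [Equiv.swap_apply_right, Equiv.swap_apply_of_ne_of_ne huy hux]
      have h1 := Fin.lt_def.mp huv
      have h2 : (u : ℕ) ≠ (y : ℕ) := fun h => huy (Fin.ext h)
      exact Fin.lt_def.mpr (by omega)
    · rwa [Equiv.swap_apply_of_ne_of_ne huy hux, Equiv.swap_apply_of_ne_of_ne hvy hvx]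

lemma spPerm_mem_iff (a : ℕ) (ha : a ≤ n) (s : Finset (Fin n)) (hs : s.card = a)
    (i : Fin n) : spPerm a ha s hs i ∈ s ↔ (i : ℕ) < a := by
  have him := Finset.ext_iff.mp (spPerm_image a ha s hs)
  constructor
  · intro h
    obtain ⟨j, hj, hje⟩ := Finset.mem_image.mp ((him _).mpr h)
    have := (spPerm a ha s hs).injective hje
    rw [← this]; exact mem_pos.mp hj
  · intro h
    exact (him _).mp (Finset.mem_image_of_mem _ (mem_pos.mpr h))

lemma sign_spPerm (a : ℕ) (ha : a ≤ n) : ∀ (N : ℕ) (s : Finset (Fin n)) (hs : s.card = a),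
    (∑ x ∈ s, (x : ℕ)) = N →
    (Equiv.Perm.sign (spPerm a ha s hs) : ℤ) = (-1) ^ (N + a * (a - 1) / 2) := by
  intro N
  induction N using Nat.strong_induction_on with
  | _ N ih =>
    intro s hs hsum
    by_cases hdc : ∃ x ∈ s, (x : ℕ) ≠ 0 ∧ (⟨(x : ℕ) - 1, by have := x.isLt; omega⟩ : Fin n) ∉ s
    · obtain ⟨x, hxs, hx0, hps⟩ := hdc
      set y : Fin n := ⟨(x : ℕ) - 1, by have := x.isLt; omega⟩ with hydef
      have hxy : (x : ℕ) = (y : ℕ) + 1 := by simp [hydef]; omega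
      set s' : Finset (Fin n) := insert y (s.erase x) with hs'def
      have hyne : y ∉ s.erase x := fun h => hps (Finset.mem_of_mem_erase h)
      have hys' : y ∈ s' := Finset.mem_insert_self _ _
      have hxs' : x ∉ s' := by
        rw [hs'def]
        simp only [Finset.mem_insert, Finset.mem_erase]
        push_neg
        exact ⟨fun h => hx0 (by rw [h] at hxy; omega), fun h _ => h rfl⟩
      have hs' : s'.card = a := by
        rw [hs'def, Finset.card_insert_of_notMem hyne, Finset.card_erase_of_mem hxs, hs]
        have : 0 < a := by rw [← hs]; exact Finset.card_pos.mpr ⟨x, hxs⟩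
        omega
      have hsum' : (∑ x ∈ s', (x : ℕ)) + 1 = N := by
        rw [hs'def, Finset.sum_insert hyne, ← hsum, ← Finset.add_sum_erase _ _ hxs]
        omega
      -- the composite permutation
      have hcomp : spPerm a ha s hs = Equiv.swap y x * spPerm a ha s' hs' := by
        apply cond_unique ha (spPerm_cond a ha s hs)
        · constructor
          · intro i j hij hj
            simp only [Equiv.Perm.mul_apply]
            exact swap_mono_mem hys' hxs' hxy
              ((spPerm_mem_iff a ha s' hs' i).mpr (lt_trans (Fin.lt_def.mp hij) hj))
              ((spPerm_mem_iff a ha s' hs' j).mpr hj)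
              ((spPerm_cond a ha s' hs').1 i j hij hj)
          · intro i j hij hi
            simp only [Equiv.Perm.mul_apply]
            have hja : a ≤ (j : ℕ) := le_trans hi (le_of_lt (Fin.lt_def.mp hij))
            exact swap_mono_notMem hys' hxs' hxy
              (fun h => by have := (spPerm_mem_iff a ha s' hs' i).mp h; omega)
              (fun h => by have := (spPerm_mem_iff a ha s' hs' j).mp h; omega)
              ((spPerm_cond a ha s' hs').2 i j hij hi)
        · rw [spPerm_image]
          have : Finset.image (⇑(Equiv.swap y x * spPerm a ha s' hs')) (pos n a)
              = Finset.image (Equiv.swap y x) (Finset.image (spPerm a ha s' hs') (pos n a)) := by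
            rw [Finset.image_image]; rfl
          rw [this, spPerm_image]
          ext z
          simp only [Finset.mem_image]
          constructor
          · intro hz
            rcases eq_or_ne z x with h | hzx
            · exact ⟨y, hys', by rw [Equiv.swap_apply_left, h]⟩
            · have hzy : z ≠ y := fun h => hps (h ▸ hz)
              refine ⟨z, ?_, Equiv.swap_apply_of_ne_of_ne hzy hzx⟩
              rw [hs'def]
              exact Finset.mem_insert_of_mem (Finset.mem_erase.mpr ⟨hzx, hz⟩)
          · rintro ⟨w, hw, rfl⟩
            rcases eq_or_ne w y with rfl | hwy
            · rw [Equiv.swap_apply_left]; exact hxs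
            · have hwx : w ≠ x := fun h => hxs' (h ▸ hw)
              rw [Equiv.swap_apply_of_ne_of_ne hwy hwx]
              rw [hs'def] at hw
              rcases Finset.mem_insert.mp hw with h | h
              · exact absurd h hwy
              · exact Finset.mem_of_mem_erase h
      have hyx : y ≠ x := fun h => by rw [h] at hxy; omega
      have hsum'' : (∑ x ∈ s', (x : ℕ)) < N := by omega
      have ihs := ih _ hsum'' s' hs' rfl
      rw [hcomp, map_mul, Equiv.Perm.sign_swap hyx]
      push_cast
      rw [ihs, ← hsum',
        show (∑ x ∈ s', (x : ℕ)) + 1 + a * (a - 1) / 2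
          = ((∑ x ∈ s', (x : ℕ)) + a * (a - 1) / 2) + 1 by omega, pow_succ]
      ring
    · -- s is down-closed, hence s = pos n a and spPerm = 1
      push_neg at hdc
      have hdown : ∀ (d : ℕ) (x : Fin n), x ∈ s →
          (⟨(x : ℕ) - d, by have := x.isLt; omega⟩ : Fin n) ∈ s := by
        intro d
        induction d with
        | zero => intro x hx; simpa using hx
        | succ d ihd =>
          intro x hx
          have h1 := ihd x hx
          by_cases h0 : ((x : ℕ) - d) = 0
          · have : (⟨(x : ℕ) - (d+1), by have := x.isLt; omega⟩ : Fin n)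
                = ⟨(x : ℕ) - d, by have := x.isLt; omega⟩ := Fin.ext (by simp; omega)
            rw [this]; exact h1
          · have h2 := hdc _ h1 (by simp; omega)
            have heq : (⟨(x : ℕ) - (d+1), by have := x.isLt; omega⟩ : Fin n)
                = ⟨((⟨(x : ℕ) - d, by have := x.isLt; omega⟩ : Fin n) : ℕ) - 1,
                    by have := x.isLt; simp; omega⟩ := Fin.ext (by simp; omega)
            rw [heq]; exact h2
      have hlt : ∀ x ∈ s, (x : ℕ) < a := by
        intro x hx
        have hsub : Finset.range ((x : ℕ) + 1) ⊆ s.image Fin.val := by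
          intro j hj
          have hj' := Finset.mem_range.mp hj
          refine Finset.mem_image.mpr ⟨⟨(x : ℕ) - ((x : ℕ) - j), by have := x.isLt; omega⟩,
            hdown _ x hx, by simp; omega⟩
        have := Finset.card_le_card hsub
        rw [Finset.card_range, Finset.card_image_of_injective _ Fin.val_injective, hs] at this
        omega
      have hseq : s = pos n a := by
        apply Finset.eq_of_subset_of_card_le
        · intro x hx; exact mem_pos.mpr (hlt x hx)
        · rw [card_pos ha, hs]
      have hone : spPerm a ha s hs = 1 := by
        apply cond_unique ha (spPerm_cond a ha s hs)
        · exact ⟨fun i j hij _ => hij, fun i j hij _ => hij⟩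
        · rw [spPerm_image, hseq]
          simp
      have hNval : N = a * (a - 1) / 2 := by
        rw [← hsum, hseq, sum_pos ha]
      rw [hone, hNval]
      simp [← two_mul, pow_mul]

end ShuffleAux

namespace ShuffleAux
open Finset

/-- Sum of `(-1)^(sum of elements)` over `k`-subsets of `range n`. -/
def gg (n k : ℕ) : ℤ := ∑ t ∈ Finset.powersetCard k (Finset.range n), (-1 : ℤ) ^ (∑ m ∈ t, m)

lemma gg_zero (n : ℕ) : gg n 0 = 1 := by simp [gg]

lemma gg_of_gt {n k : ℕ} (h : n < k) : gg n k = 0 := by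
  rw [gg, Finset.powersetCard_eq_empty.mpr (by simpa using h), Finset.sum_empty]

lemma gg_succ (n k : ℕ) : gg (n+1) (k+1) = gg n (k+1) + (-1:ℤ)^n * gg n k := by
  have hnr : n ∉ Finset.range n := Finset.notMem_range_self
  have hdisj : Disjoint (Finset.powersetCard (k+1) (Finset.range n))
      ((Finset.powersetCard k (Finset.range n)).image (insert n)) := by
    rw [Finset.disjoint_left]
    intro u hu hu'
    obtain ⟨t, ht, rfl⟩ := Finset.mem_image.mp hu'
    have : n ∈ Finset.range n := (Finset.mem_powersetCard.mp hu).1 (Finset.mem_insert_self n t)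
    exact hnr this
  have hinj : ∀ x ∈ Finset.powersetCard k (Finset.range n),
      ∀ y ∈ Finset.powersetCard k (Finset.range n), insert n x = insert n y → x = y := by
    intro x hx y hy hxy
    have hnx : n ∉ x := fun h => hnr ((Finset.mem_powersetCard.mp hx).1 h)
    have hny : n ∉ y := fun h => hnr ((Finset.mem_powersetCard.mp hy).1 h)
    rw [← Finset.erase_insert hnx, hxy, Finset.erase_insert hny]
  rw [gg, Finset.range_add_one, Finset.powersetCard_succ_insert hnr, Finset.sum_union hdisj,
    Finset.sum_image hinj]
  rw [gg, gg, Finset.mul_sum]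
  congr 1
  refine Finset.sum_congr rfl fun t ht => ?_
  have hnt : n ∉ t := fun h => hnr ((Finset.mem_powersetCard.mp ht).1 h)
  rw [Finset.sum_insert hnt, pow_add]

/-- Claimed closed form. -/
def G (n k : ℕ) : ℤ :=
  (-1:ℤ)^(k*(k-1)/2) * (if Odd k ∧ Odd (n-k) then 0 else ((n/2).choose (k/2) : ℤ))

lemma tri_succ (k : ℕ) : (k+1)*k/2 = k*(k-1)/2 + k := by
  cases k with
  | zero => simp
  | succ m =>
    have h1 : (m+1+1)*(m+1) = (m+1)*m + 2*(m+1) := by ring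
    have h2 : 2 ∣ (m+1)*m := (Nat.mul_comm (m+1) m ▸ (Nat.even_mul_succ_self m)).two_dvd
    simp only [Nat.add_sub_cancel]
    omega

lemma G_diag (n : ℕ) : G (n+1) (n+1) = (-1:ℤ)^n * G n n := by
  unfold G
  have h0 : ¬ (Odd (n+1) ∧ Odd ((n+1)-(n+1))) := by rintro ⟨-, h⟩; simp at h
  have h1 : ¬ (Odd n ∧ Odd (n-n)) := by rintro ⟨-, h⟩; simp at h
  rw [if_neg h0, if_neg h1, Nat.choose_self, Nat.choose_self]
  rw [show (n+1) - 1 = n from rfl, tri_succ, pow_add]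
  ring

lemma G_rec (n k : ℕ) (h : k + 1 ≤ n) :
    G (n+1) (k+1) = G n (k+1) + (-1:ℤ)^n * G n k := by
  unfold G
  rw [show (k+1) - 1 = k from rfl, tri_succ, pow_add]
  rcases Nat.even_or_odd k with hk | hk <;> rcases Nat.even_or_odd n with hn | hn
  · -- k even, n even
    have hk2 : k % 2 = 0 := Nat.even_iff.mp hk
    have hn2 : n % 2 = 0 := Nat.even_iff.mp hn
    rw [if_neg (by simp only [Nat.odd_iff]; omega),
      if_pos ⟨Nat.odd_iff.mpr (by omega), Nat.odd_iff.mpr (by omega)⟩,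
      if_neg (by simp only [Nat.odd_iff]; omega),
      show (n+1)/2 = n/2 by omega, show (k+1)/2 = k/2 by omega,
      hk.neg_one_pow, hn.neg_one_pow]
    ring
  · -- k even, n odd
    have hk2 : k % 2 = 0 := Nat.even_iff.mp hk
    have hn2 : n % 2 = 1 := Nat.odd_iff.mp hn
    rw [if_pos ⟨Nat.odd_iff.mpr (by omega), Nat.odd_iff.mpr (by omega)⟩,
      if_neg (by simp only [Nat.odd_iff]; omega),
      if_neg (by simp only [Nat.odd_iff]; omega),
      show (k+1)/2 = k/2 by omega,
      hk.neg_one_pow, hn.neg_one_pow]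
    ring
  · -- k odd, n even
    have hk2 : k % 2 = 1 := Nat.odd_iff.mp hk
    have hn2 : n % 2 = 0 := Nat.even_iff.mp hn
    rw [if_neg (by simp only [Nat.odd_iff]; omega),
      if_neg (by simp only [Nat.odd_iff]; omega),
      if_pos ⟨Nat.odd_iff.mpr (by omega), Nat.odd_iff.mpr (by omega)⟩,
      show (n+1)/2 = n/2 by omega]
    ring
  · -- k odd, n odd
    have hk2 : k % 2 = 1 := Nat.odd_iff.mp hk
    have hn2 : n % 2 = 1 := Nat.odd_iff.mp hn
    rw [if_neg (by simp only [Nat.odd_iff]; omega),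
      if_neg (by simp only [Nat.odd_iff]; omega),
      if_neg (by simp only [Nat.odd_iff]; omega),
      show (n+1)/2 = n/2 + 1 by omega, show (k+1)/2 = k/2 + 1 by omega,
      Nat.choose_succ_succ, hk.neg_one_pow, hn.neg_one_pow]
    push_cast
    ring

lemma gg_eq_G : ∀ n k : ℕ, k ≤ n → gg n k = G n k := by
  intro n
  induction n with
  | zero =>
    intro k hk
    interval_cases k
    rw [gg_zero]
    simp [G]
  | succ n ihn =>
    intro k hk
    cases k with
    | zero =>
      rw [gg_zero]
      simp [G]
    | succ k =>
      rw [gg_succ]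
      rcases Nat.lt_or_ge k n with hlt | hge
      · rw [ihn (k+1) hlt, ihn k (by omega), G_rec n k hlt]
      · have hkn : k = n := by omega
        subst hkn
        rw [gg_of_gt (by omega), ihn k le_rfl, G_diag]
        ring

end ShuffleAux


namespace ShuffleAux
open Finset Equiv

lemma step1 (n a : ℕ) (ha : a ≤ n) :
    shuffleSignSum n a
      = ∑ s ∈ Finset.powersetCard a (Finset.univ : Finset (Fin n)),
          (-1 : ℤ) ^ ((∑ x ∈ s, (x : ℕ)) + a * (a - 1) / 2) := by
  rw [shuffleSignSum, ← Finset.sum_filter]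
  refine Finset.sum_bij' (i := fun σ _ => (pos n a).image σ)
    (j := fun s hs => spPerm a ha s (Finset.mem_powersetCard.mp hs).2)
    ?_ ?_ ?_ ?_ ?_
  · intro σ hσ
    exact Finset.mem_powersetCard.mpr ⟨Finset.subset_univ _,
      by rw [Finset.card_image_of_injective _ σ.injective, card_pos ha]⟩
  · intro s hs
    exact Finset.mem_filter.mpr ⟨Finset.mem_univ _, spPerm_cond a ha s _⟩
  · intro σ hσ
    exact (cond_eq_spPerm ha (Finset.mem_filter.mp hσ).2).symm
  · intro s hs
    exact spPerm_image a ha s _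
  · intro σ hσ
    have hc : shCond a σ := (Finset.mem_filter.mp hσ).2
    have hcard : ((pos n a).image σ).card = a := by
      rw [Finset.card_image_of_injective _ σ.injective, card_pos ha]
    show (Equiv.Perm.sign σ : ℤ)
        = (-1:ℤ) ^ ((∑ x ∈ (pos n a).image σ, (x : ℕ)) + a * (a - 1) / 2)
    conv_lhs => rw [cond_eq_spPerm ha hc]
    exact sign_spPerm a ha _ _ hcard rfl

lemma step2 (n a : ℕ) :
    (∑ s ∈ Finset.powersetCard a (Finset.univ : Finset (Fin n)),
        (-1:ℤ) ^ (∑ x ∈ s, (x:ℕ)))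
      = gg n a := by
  rw [gg]
  refine Finset.sum_bij' (i := fun s _ => s.image Fin.val)
    (j := fun t ht => t.attachFin
      (fun m hm => Finset.mem_range.mp ((Finset.mem_powersetCard.mp ht).1 hm)))
    ?_ ?_ ?_ ?_ ?_
  · intro s hs
    refine Finset.mem_powersetCard.mpr ⟨fun m hm => ?_, ?_⟩
    · obtain ⟨x, _, rfl⟩ := Finset.mem_image.mp hm
      exact Finset.mem_range.mpr x.isLt
    · rw [Finset.card_image_of_injective _ Fin.val_injective]
      exact (Finset.mem_powersetCard.mp hs).2
  · intro t ht
    refine Finset.mem_powersetCard.mpr ⟨Finset.subset_univ _, ?_⟩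
    rw [Finset.card_attachFin]
    exact (Finset.mem_powersetCard.mp ht).2
  · intro s hs
    ext x
    rw [Finset.mem_attachFin]
    constructor
    · intro hx
      obtain ⟨y, hy, hxy⟩ := Finset.mem_image.mp hx
      rwa [Fin.val_injective hxy] at hy
    · intro hx
      exact Finset.mem_image_of_mem _ hx
  · intro t ht
    ext m
    simp only [Finset.mem_image]
    constructor
    · rintro ⟨x, hx, rfl⟩
      rw [Finset.mem_attachFin] at hx
      exact hx
    · intro hm
      exact ⟨⟨m, Finset.mem_range.mp ((Finset.mem_powersetCard.mp ht).1 hm)⟩,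
        by rw [Finset.mem_attachFin]; exact hm, rfl⟩
  · intro s hs
    congr 1
    rw [Finset.sum_image (fun x _ y _ h => Fin.val_injective h)]

end ShuffleAux

theorem sum_signs_shuffles (a b : ℕ) :
    shuffleSignSum (a + b) a =
      if Odd a ∧ Odd b then 0 else (((a + b) / 2).choose (a / 2) : ℤ) := by
  have ha : a ≤ a + b := Nat.le_add_right a b
  rw [ShuffleAux.step1 (a+b) a ha]
  have hpull : (∑ s ∈ Finset.powersetCard a (Finset.univ : Finset (Fin (a+b))),
      (-1 : ℤ) ^ ((∑ x ∈ s, (x : ℕ)) + a * (a - 1) / 2))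
      = (-1:ℤ)^(a*(a-1)/2) * ∑ s ∈ Finset.powersetCard a (Finset.univ : Finset (Fin (a+b))),
          (-1 : ℤ) ^ (∑ x ∈ s, (x : ℕ)) := by
    rw [Finset.mul_sum]
    exact Finset.sum_congr rfl fun s _ => by rw [pow_add]; ring
  rw [hpull, ShuffleAux.step2, ShuffleAux.gg_eq_G (a+b) a ha, ShuffleAux.G,
    ← mul_assoc, ← pow_add, Even.neg_one_pow ⟨a*(a-1)/2, rfl⟩, one_mul,
    show a + b - a = b by omega]
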